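/- Let G be a simple graph on a finite nonempty vertex type V and let k ≥ 1. Suppose no k-element subset of V is a dominating set of G. Then in the graph G' of the dominating-set-to-diameter reduction, every two vertices are at distance at most 3; in particular G' is connected and its diameter is at most 3. -/

import Mathlib

/-- `S` dominates `v` in `G` if `v ∈ S` or some element of `S` is adjacent to `v`. -/
def SimpleGraph.DominatesVert {V : Type*} (G : SimpleGraph V) (S : Finset V) (v : V) : Prop :=
  v ∈ S ∨ ∃ u ∈ S, G.Adj u v

/-- `S` is a dominating set of `G` if it dominates every vertex. -/
def SimpleGraph.IsDominatingSet {V : Type*} (G : SimpleGraph V) (S : Finset V) : Prop :=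
  ∀ v : V, G.DominatesVert S v

/-- The dominating-set-to-diameter reduction graph `G'`: its vertices are the `k`-element
subsets of `V` together with the elements of `V`; the elements of `V` form a clique; a
`k`-subset `S` is adjacent to a vertex `v ∈ V` iff `S` does not dominate `v`; two `k`-subsets
are never adjacent. -/
def SimpleGraph.reductionGraph {V : Type*} (G : SimpleGraph V) (k : ℕ) :
    SimpleGraph ({A : Finset V // A.card = k} ⊕ V) where
  Adj x y :=
    match x, y with
    | Sum.inl _, Sum.inl _ => False
    | Sum.inl S, Sum.inr v => ¬ G.DominatesVert S.1 v
    | Sum.inr v, Sum.inl S => ¬ G.DominatesVert S.1 v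
    | Sum.inr u, Sum.inr v => u ≠ v
  symm := by
    constructor
    rintro (S | u) (T | v) hadj
    · exact hadj
    · exact hadj
    · exact hadj
    · exact hadj.symm
  loopless := by
    constructor
    rintro (S | u) hadj
    · exact hadj
    · exact hadj rfl

/-- If no `k`-element subset of `V` is a dominating set of `G`, then any two vertices of the
reduction graph `G'` are at distance at most `3`; in particular `G'` is connected (and its
diameter is at most `3`). -/
theorem reduction_dist_le_three {V : Type*} [Fintype V] [DecidableEq V] [Nonempty V]
    (G : SimpleGraph V) (k : ℕ) (hk : 1 ≤ k)
    (hno : ∀ A : Finset V, A.card = k → ¬ G.IsDominatingSet A) :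
    (G.reductionGraph k).Connected ∧
      ∀ x y : {A : Finset V // A.card = k} ⊕ V, (G.reductionGraph k).dist x y ≤ 3 := by
  classical
  have key : ∀ S : {A : Finset V // A.card = k}, ∃ v : V, ¬ G.DominatesVert S.1 v := by
    intro S
    by_contra h
    push_neg at h
    exact hno S.1 S.2 (fun v => h v)
  have hw : ∀ x y : {A : Finset V // A.card = k} ⊕ V,
      ∃ p : (G.reductionGraph k).Walk x y, p.length ≤ 3 := by
    rintro (S | u) (T | w)
    · obtain ⟨v, hv⟩ := key S
      obtain ⟨v', hv'⟩ := key T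
      by_cases h : v = v'
      · subst h
        exact ⟨SimpleGraph.Walk.cons (show (G.reductionGraph k).Adj (Sum.inl S) (Sum.inr v) from hv) (SimpleGraph.Walk.cons
          (show (G.reductionGraph k).Adj (Sum.inr v) (Sum.inl T) from hv')
          SimpleGraph.Walk.nil), by simp⟩
      · exact ⟨SimpleGraph.Walk.cons (show (G.reductionGraph k).Adj (Sum.inl S) (Sum.inr v) from hv) (SimpleGraph.Walk.cons
          (show (G.reductionGraph k).Adj (Sum.inr v) (Sum.inr v') from h)
          (SimpleGraph.Walk.cons
            (show (G.reductionGraph k).Adj (Sum.inr v') (Sum.inl T) from hv')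
            SimpleGraph.Walk.nil)), by simp⟩
    · obtain ⟨v, hv⟩ := key S
      by_cases h : v = w
      · subst h
        exact ⟨SimpleGraph.Walk.cons (show (G.reductionGraph k).Adj (Sum.inl S) (Sum.inr v) from hv) SimpleGraph.Walk.nil, by simp⟩
      · exact ⟨SimpleGraph.Walk.cons (show (G.reductionGraph k).Adj (Sum.inl S) (Sum.inr v) from hv) (SimpleGraph.Walk.cons
          (show (G.reductionGraph k).Adj (Sum.inr v) (Sum.inr w) from h)
          SimpleGraph.Walk.nil), by simp⟩
    · obtain ⟨v, hv⟩ := key T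
      by_cases h : u = v
      · subst h
        exact ⟨SimpleGraph.Walk.cons
          (show (G.reductionGraph k).Adj (Sum.inr u) (Sum.inl T) from hv)
          SimpleGraph.Walk.nil, by simp⟩
      · exact ⟨SimpleGraph.Walk.cons
          (show (G.reductionGraph k).Adj (Sum.inr u) (Sum.inr v) from h)
          (SimpleGraph.Walk.cons
            (show (G.reductionGraph k).Adj (Sum.inr v) (Sum.inl T) from hv)
            SimpleGraph.Walk.nil), by simp⟩
    · by_cases h : u = w
      · subst h
        exact ⟨SimpleGraph.Walk.nil, by simp⟩
      · exact ⟨SimpleGraph.Walk.cons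
          (show (G.reductionGraph k).Adj (Sum.inr u) (Sum.inr w) from h)
          SimpleGraph.Walk.nil, by simp⟩
  constructor
  · constructor
    intro x y
    obtain ⟨p, _⟩ := hw x y
    exact p.reachable
  · intro x y
    obtain ⟨p, hp⟩ := hw x y
    exact le_trans (SimpleGraph.dist_le p) hp
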